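/- Let n ≥ 2, let S be a constant symmetric positive-definite (n−1)×(n−1) real matrix, let ε > 0, C ≥ 0, and let γ : (0, ε) → (symmetric (n−1)×(n−1) real matrices) be differentiable with ‖γ(r) − r²·S‖ ≤ C·r⁴ and ‖γ′(r) − 2r·S‖ ≤ C·r³ for all r ∈ (0, ε). Then there exist ε′ ∈ (0, ε] and C′ ≥ 0 such that for all r ∈ (0, ε′) the matrix γ(r) is invertible and the expansion τ(r) := (1/2)·tr(γ(r)⁻¹·γ′(r)) satisfies |τ(r) − (n−1)/r| ≤ C′·r. -/

import Mathlib

open Matrix Set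

attribute [local instance] Matrix.linftyOpNormedRing Matrix.linftyOpNormedSpace
  Matrix.linftyOpIsBoundedSMul

section helper
variable {N : ℕ}

lemma norm_le_of_entry (A : Matrix (Fin N) (Fin N) ℝ) {b : ℝ} (hb0 : 0 ≤ b)
    (h : ∀ i j, |A i j| ≤ b) : ‖A‖ ≤ N * b := by
  rw [Matrix.linfty_opNorm_def]
  have hsup : (Finset.univ : Finset (Fin N)).sup (fun i => ∑ j, ‖A i j‖₊) ≤
      N • b.toNNReal := by
    refine Finset.sup_le fun i _ => ?_
    calc ∑ j, ‖A i j‖₊ ≤ Finset.univ.card • b.toNNReal := by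
          refine Finset.sum_le_card_nsmul _ _ _ fun j _ => ?_
          rw [← NNReal.coe_le_coe, coe_nnnorm, Real.coe_toNNReal _ hb0]
          exact h i j
      _ = N • b.toNNReal := by simp
  calc ((Finset.univ.sup (fun i => ∑ j, ‖A i j‖₊) : NNReal) : ℝ)
      ≤ ((N • b.toNNReal : NNReal) : ℝ) := NNReal.coe_le_coe.mpr hsup
    _ = N * b := by simp [Real.coe_toNNReal _ hb0]

lemma abs_trace_le (A : Matrix (Fin N) (Fin N) ℝ) : |A.trace| ≤ N * ‖A‖ := by
  have h : ∀ i, |A i i| ≤ ‖A‖ := by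
    intro i
    rw [Matrix.linfty_opNorm_def]
    calc |A i i| = ((‖A i i‖₊ : NNReal) : ℝ) := by simp [coe_nnnorm, Real.norm_eq_abs]
      _ ≤ ((∑ j, ‖A i j‖₊ : NNReal) : ℝ) := by
          exact_mod_cast NNReal.coe_le_coe.mpr (Finset.single_le_sum
            (f := fun j => ‖A i j‖₊) (fun j _ => zero_le) (Finset.mem_univ i))
      _ ≤ _ := NNReal.coe_le_coe.mpr
            (Finset.le_sup (f := fun i => ∑ j, ‖A i j‖₊) (Finset.mem_univ i))
  calc |A.trace| ≤ ∑ i, |A i i| := Finset.abs_sum_le_sum_abs _ _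
    _ ≤ ∑ _i : Fin N, ‖A‖ := Finset.sum_le_sum fun i _ => h i
    _ = N * ‖A‖ := by simp [mul_comm]

end helper

set_option maxHeartbeats 1000000 in
theorem expansion_near_vertex (n : ℕ) (hn : 2 ≤ n)
    (S : Matrix (Fin (n-1)) (Fin (n-1)) ℝ) (hS : S.PosDef)
    (ε C : ℝ) (hε : 0 < ε) (hC : 0 ≤ C)
    (γ γ' : ℝ → Matrix (Fin (n-1)) (Fin (n-1)) ℝ)
    (hsymm : ∀ r ∈ Ioo 0 ε, (γ r).IsSymm)
    (hderiv : ∀ r ∈ Ioo 0 ε, ∀ i j, HasDerivAt (fun s => γ s i j) (γ' r i j) r)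
    (hb : ∀ r ∈ Ioo 0 ε, ∀ i j, |γ r i j - r^2 * S i j| ≤ C * r^4)
    (hb' : ∀ r ∈ Ioo 0 ε, ∀ i j, |γ' r i j - 2 * r * S i j| ≤ C * r^3) :
    ∃ ε' C' : ℝ, 0 < ε' ∧ ε' ≤ ε ∧ 0 ≤ C' ∧
      ∀ r ∈ Ioo 0 ε', IsUnit (γ r) ∧
        |(1/2 : ℝ) * ((γ r)⁻¹ * γ' r).trace - ((n:ℝ)-1)/r| ≤ C' * r := by
  have hone : 1 ≤ n := le_trans one_le_two hn
  set Nn : ℝ := ((n - 1 : ℕ) : ℝ) with hNn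
  have hNncast : (n : ℝ) - 1 = Nn := by
    rw [hNn, Nat.cast_sub hone, Nat.cast_one]
  have hNn0 : 0 ≤ Nn := Nat.cast_nonneg _
  -- S is invertible
  have hSd : IsUnit S.det := isUnit_iff_ne_zero.mpr hS.det_pos.ne'
  have hSu : IsUnit S := (Matrix.isUnit_iff_isUnit_det S).mpr hSd
  set K : ℝ := ‖S⁻¹‖ with hKdef
  have hK : 0 < K := by
    rw [hKdef, norm_pos_iff]
    intro h
    have h1 : S⁻¹ * S = 1 := Matrix.nonsing_inv_mul S hSd
    rw [h, Matrix.zero_mul] at h1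
    have i0 : Fin (n - 1) := ⟨0, by omega⟩
    have := congrFun (congrFun h1 i0) i0
    simp [Matrix.one_apply_eq] at this
  set D : ℝ := Nn * C with hDdef
  have hD0 : 0 ≤ D := mul_nonneg hNn0 hC
  refine ⟨min ε (min 1 (2*D*K+1)⁻¹), 3*Nn*K*D, ?_, min_le_left _ _, ?_, ?_⟩
  · exact lt_min hε (lt_min one_pos (by positivity))
  · positivity
  intro r hr
  obtain ⟨hr0, hrlt⟩ := hr
  have hrε : r < ε := lt_of_lt_of_le hrlt (min_le_left _ _)
  have hr1 : r < 1 := lt_of_lt_of_le hrlt (le_trans (min_le_right _ _) (min_le_left _ _))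
  have hrδ : r < (2*D*K+1)⁻¹ :=
    lt_of_lt_of_le hrlt (le_trans (min_le_right _ _) (min_le_right _ _))
  have hrmem : r ∈ Ioo 0 ε := ⟨hr0, hrε⟩
  have hr2ne : (r^2 : ℝ) ≠ 0 := by positivity
  -- norm bounds from entrywise bounds
  set E0 : Matrix (Fin (n-1)) (Fin (n-1)) ℝ := γ r - (r^2) • S with hE0def
  set F : Matrix (Fin (n-1)) (Fin (n-1)) ℝ := γ' r - (2*r) • S with hFdef
  have hE0 : ‖E0‖ ≤ D * r^4 := by
    have := norm_le_of_entry E0 (b := C * r^4) (by positivity) (fun i j => by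
      simpa [hE0def, Matrix.sub_apply, Matrix.smul_apply, smul_eq_mul] using hb r hrmem i j)
    calc ‖E0‖ ≤ (n-1 : ℕ) * (C * r^4) := this
      _ = D * r^4 := by rw [hDdef, hNn]; ring
  have hF : ‖F‖ ≤ D * r^3 := by
    have := norm_le_of_entry F (b := C * r^3) (by positivity) (fun i j => by
      simpa [hFdef, Matrix.sub_apply, Matrix.smul_apply, smul_eq_mul, mul_assoc]
        using hb' r hrmem i j)
    calc ‖F‖ ≤ (n-1 : ℕ) * (C * r^3) := this
      _ = D * r^3 := by rw [hDdef, hNn]; ring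
  -- the rescaled matrix M
  set M : Matrix (Fin (n-1)) (Fin (n-1)) ℝ := S + (r^2)⁻¹ • E0 with hMdef
  have hMS : M - S = (r^2)⁻¹ • E0 := by rw [hMdef]; abel
  have hA : γ r = r^2 • M := by
    rw [hMdef, smul_add, smul_smul, mul_inv_cancel₀ hr2ne, one_smul, hE0def]
    abel
  have hEn : ‖M - S‖ ≤ D * r^2 := by
    rw [hMS, norm_smul, Real.norm_eq_abs, abs_of_pos (by positivity : (0:ℝ) < (r^2)⁻¹)]
    calc (r^2)⁻¹ * ‖E0‖ ≤ (r^2)⁻¹ * (D * r^4) := by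
          exact mul_le_mul_of_nonneg_left hE0 (by positivity)
      _ = D * r^2 := by field_simp
  -- smallness
  have hpos1 : (0:ℝ) < 2*D*K+1 := by positivity
  have hsmall : D * r^2 * K ≤ 1/2 := by
    have hr2r : r^2 ≤ r := by nlinarith
    have h1 : D*K*(2*D*K+1)⁻¹ ≤ 1/2 := by
      rw [← div_eq_mul_inv, div_le_iff₀ hpos1]
      nlinarith [mul_nonneg hD0 hK.le]
    have h2 : D * r^2 * K ≤ D * (2*D*K+1)⁻¹ * K := by
      have : r^2 ≤ (2*D*K+1)⁻¹ := le_trans hr2r hrδ.le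
      nlinarith [mul_nonneg hD0 hK.le]
    calc D * r^2 * K ≤ D * (2*D*K+1)⁻¹ * K := h2
      _ = D*K*(2*D*K+1)⁻¹ := by ring
      _ ≤ 1/2 := h1
  have hEK : ‖M - S‖ * K ≤ 1/2 :=
    le_trans (mul_le_mul_of_nonneg_right hEn hK.le) hsmall
  -- M is a unit
  have hMu : IsUnit M := by
    have hlt : ‖M - S‖ < K⁻¹ := by
      have h2 : ‖M - S‖ * K < 1 := by linarith
      calc ‖M - S‖ = (‖M - S‖ * K) * K⁻¹ := by field_simp
        _ < 1 * K⁻¹ := by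
            exact mul_lt_mul_of_pos_right h2 (inv_pos.mpr hK)
        _ = K⁻¹ := one_mul _
    refine (Units.ofNearby hSu.unit M ?_).isUnit
    rw [Matrix.coe_units_inv, IsUnit.unit_spec]
    exact hlt
  have hMd : IsUnit M.det := (Matrix.isUnit_iff_isUnit_det M).mp hMu
  have hMinvM : M⁻¹ * M = 1 := Matrix.nonsing_inv_mul M hMd
  have hSSinv : S * S⁻¹ = 1 := Matrix.mul_nonsing_inv S hSd
  -- bound on ‖M⁻¹‖
  have hMinvK : ‖M⁻¹‖ ≤ 2*K := by
    have hid : M⁻¹ = S⁻¹ + M⁻¹ * (S - M) * S⁻¹ := by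
      have h3 : M⁻¹ * (S - M) * S⁻¹ = M⁻¹ - S⁻¹ := by
        rw [Matrix.mul_sub, Matrix.sub_mul, Matrix.mul_assoc, hSSinv, mul_one,
          hMinvM, Matrix.one_mul]
      rw [h3]; abel
    have h4 : ‖M⁻¹‖ ≤ K + ‖M⁻¹‖ * ‖M - S‖ * K := by
      calc ‖M⁻¹‖ = ‖S⁻¹ + M⁻¹ * (S - M) * S⁻¹‖ := by rw [← hid]
        _ ≤ ‖S⁻¹‖ + ‖M⁻¹ * (S - M) * S⁻¹‖ := norm_add_le _ _
        _ ≤ K + ‖M⁻¹ * (S - M)‖ * ‖S⁻¹‖ := by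
            have := norm_mul_le (M⁻¹ * (S - M)) S⁻¹
            rw [hKdef]; linarith
        _ ≤ K + ‖M⁻¹‖ * ‖S - M‖ * K := by
            have h5 := norm_mul_le M⁻¹ (S - M)
            have : ‖M⁻¹ * (S - M)‖ * ‖S⁻¹‖ ≤ ‖M⁻¹‖ * ‖S - M‖ * ‖S⁻¹‖ :=
              mul_le_mul_of_nonneg_right h5 (norm_nonneg _)
            rw [hKdef]; linarith
        _ = K + ‖M⁻¹‖ * ‖M - S‖ * K := by rw [norm_sub_rev]
    have h6 : ‖M⁻¹‖ * (‖M - S‖ * K) ≤ ‖M⁻¹‖ * (1/2) :=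
      mul_le_mul_of_nonneg_left hEK (norm_nonneg M⁻¹)
    nlinarith [norm_nonneg M⁻¹]
  -- γ r is a unit
  have hunit : IsUnit (γ r) := by
    rw [Matrix.isUnit_iff_isUnit_det, hA, Matrix.det_smul, isUnit_iff_ne_zero]
    exact mul_ne_zero (pow_ne_zero _ hr2ne) (isUnit_iff_ne_zero.mp hMd)
  refine ⟨hunit, ?_⟩
  -- inverse of γ r
  have hAinv : (γ r)⁻¹ = (r^2)⁻¹ • M⁻¹ := by
    apply Matrix.inv_eq_left_inv
    rw [hA, Matrix.smul_mul, Matrix.mul_smul, smul_smul, inv_mul_cancel₀ hr2ne,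
      one_smul, hMinvM]
  -- trace computation
  set t1 : ℝ := (M⁻¹ * (M - S)).trace with ht1def
  set t2 : ℝ := (M⁻¹ * F).trace with ht2def
  have hγ' : γ' r = (2*r) • S + F := by rw [hFdef]; abel
  have htrMS : (M⁻¹ * S).trace = Nn - t1 := by
    have : M⁻¹ * S = 1 - M⁻¹ * (M - S) := by
      rw [Matrix.mul_sub, hMinvM]; abel
    rw [this, Matrix.trace_sub, Matrix.trace_one, ht1def]
    congr 1
    simp [hNn]
  have htr : ((γ r)⁻¹ * γ' r).trace = (r^2)⁻¹ * (2*r*(Nn - t1) + t2) := by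
    rw [hAinv, hγ', Matrix.smul_mul, Matrix.mul_add, Matrix.mul_smul,
      Matrix.trace_smul, Matrix.trace_add, Matrix.trace_smul, htrMS, ← ht2def]
    simp [smul_eq_mul]
  -- bounds on t1, t2
  have ht1 : |t1| ≤ Nn * (2*K*(D*r^2)) := by
    calc |t1| ≤ (n-1:ℕ) * ‖M⁻¹ * (M - S)‖ := abs_trace_le _
      _ ≤ Nn * (2*K*(D*r^2)) := by
          rw [← hNn]
          refine mul_le_mul_of_nonneg_left ?_ hNn0
          calc ‖M⁻¹ * (M - S)‖ ≤ ‖M⁻¹‖ * ‖M - S‖ := norm_mul_le _ _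
            _ ≤ (2*K) * (D*r^2) :=
                mul_le_mul hMinvK hEn (norm_nonneg _) (by positivity)
  have ht2 : |t2| ≤ Nn * (2*K*(D*r^3)) := by
    calc |t2| ≤ (n-1:ℕ) * ‖M⁻¹ * F‖ := abs_trace_le _
      _ ≤ Nn * (2*K*(D*r^3)) := by
          rw [← hNn]
          refine mul_le_mul_of_nonneg_left ?_ hNn0
          calc ‖M⁻¹ * F‖ ≤ ‖M⁻¹‖ * ‖F‖ := norm_mul_le _ _
            _ ≤ (2*K) * (D*r^3) :=
                mul_le_mul hMinvK hF (norm_nonneg _) (by positivity)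
  -- final estimate
  rw [htr, hNncast]
  have heq : (1/2 : ℝ) * ((r^2)⁻¹ * (2*r*(Nn - t1) + t2)) - Nn/r
      = (-t1)/r + t2/(2*r^2) := by
    field_simp
    ring
  rw [heq]
  have habs : |(-t1)/r + t2/(2*r^2)| ≤ |t1|/r + |t2|/(2*r^2) := by
    calc |(-t1)/r + t2/(2*r^2)| ≤ |(-t1)/r| + |t2/(2*r^2)| := abs_add_le _ _
      _ = |t1|/r + |t2|/(2*r^2) := by
          rw [abs_div, abs_div, abs_neg, abs_of_pos hr0,
            abs_of_pos (by positivity : (0:ℝ) < 2*r^2)]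
  have g1 : |t1|/r ≤ 2*Nn*K*D*r := by
    rw [div_le_iff₀ hr0]
    calc |t1| ≤ Nn * (2*K*(D*r^2)) := ht1
      _ = 2*Nn*K*D*r*r := by ring
  have g2 : |t2|/(2*r^2) ≤ Nn*K*D*r := by
    rw [div_le_iff₀ (by positivity : (0:ℝ) < 2*r^2)]
    calc |t2| ≤ Nn * (2*K*(D*r^3)) := ht2
      _ = Nn*K*D*r*(2*r^2) := by ring
  calc |(-t1)/r + t2/(2*r^2)| ≤ |t1|/r + |t2|/(2*r^2) := habs
    _ ≤ 2*Nn*K*D*r + Nn*K*D*r := add_le_add g1 g2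
    _ = 3*Nn*K*D*r := by ring
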